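/- Let a < b, let h₀ > 0, and let φ : [a,b] → ℝ be a nonnegative function that is Lipschitz continuous with constant h₀ (i.e., |φ(s) − φ(t)| ≤ h₀·|s − t| for all s, t ∈ [a,b]). Let h₁ = max_{t ∈ [a,b]} φ(t). Then ∫_a^b φ(s) ds ≥ min{ h₁²/(2h₀), h₀(b − a)²/8 }. -/

import Mathlib

open MeasureTheory intervalIntegral

/-- For a nonnegative `h₀`-Lipschitz function `φ` on `[a,b]` with maximum `h₁`,
`∫_a^b φ ≥ min (h₁²/(2h₀)) (h₀(b−a)²/8)`. -/
theorem stmt_12 (a b h₀ : ℝ) (hab : a < b) (hh₀ : 0 < h₀)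
    (φ : ℝ → ℝ)
    (hnn : ∀ t ∈ Set.Icc a b, 0 ≤ φ t)
    (hlip : ∀ s ∈ Set.Icc a b, ∀ t ∈ Set.Icc a b, |φ s - φ t| ≤ h₀ * |s - t|)
    (h₁ : ℝ) (hmax : IsGreatest (φ '' Set.Icc a b) h₁) :
    min (h₁ ^ 2 / (2 * h₀)) (h₀ * (b - a) ^ 2 / 8) ≤ ∫ s in a..b, φ s := by
  obtain ⟨⟨t₀, ht₀, hφt₀⟩, hub⟩ := hmax
  have h₁nn : 0 ≤ h₁ := hφt₀ ▸ hnn t₀ ht₀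
  have hcont : ContinuousOn φ (Set.Icc a b) := by
    refine LipschitzOnWith.continuousOn (K := h₀.toNNReal) ?_
    refine LipschitzOnWith.of_dist_le_mul fun s hs t ht => ?_
    rw [Real.coe_toNNReal _ hh₀.le, Real.dist_eq, Real.dist_eq]
    exact hlip s hs t ht
  have hint : IntervalIntegrable φ volume a b :=
    ContinuousOn.intervalIntegrable (by rwa [Set.uIcc_of_le hab.le])
  -- generic comparison lemma
  have key : ∀ (g : ℝ → ℝ), Continuous g → ∀ c d : ℝ, a ≤ c → c ≤ d → d ≤ b →
      (∀ s ∈ Set.Icc c d, g s ≤ φ s) → (∫ s in c..d, g s) ≤ ∫ s in a..b, φ s := by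
    intro g hg c d hac hcd hdb hle
    have hsub : ∀ u v : ℝ, a ≤ u → v ≤ b → u ≤ v →
        IntervalIntegrable φ volume u v := by
      intro u v hu hv huv
      refine hint.mono_set ?_
      rw [Set.uIcc_of_le huv, Set.uIcc_of_le hab.le]
      exact Set.Icc_subset_Icc hu hv
    have hIac := hsub a c le_rfl (hcd.trans hdb) hac
    have hIcd := hsub c d hac hdb hcd
    have hIdb := hsub d b (hac.trans hcd) le_rfl hdb
    have e1 : (∫ s in a..b, φ s)
        = (∫ s in a..c, φ s) + (∫ s in c..d, φ s) + (∫ s in d..b, φ s) := by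
      rw [integral_add_adjacent_intervals hIac hIcd,
        integral_add_adjacent_intervals (hIac.trans hIcd) hIdb]
    have n1 : 0 ≤ ∫ s in a..c, φ s :=
      intervalIntegral.integral_nonneg hac fun x hx =>
        hnn x ⟨hx.1, hx.2.trans (hcd.trans hdb)⟩
    have n2 : 0 ≤ ∫ s in d..b, φ s :=
      intervalIntegral.integral_nonneg hdb fun x hx =>
        hnn x ⟨(hac.trans hcd).trans hx.1, hx.2⟩
    have m : (∫ s in c..d, g s) ≤ ∫ s in c..d, φ s :=
      intervalIntegral.integral_mono_on hcd (hg.intervalIntegrable c d) hIcd hle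
    linarith
  set L := min (h₁ / h₀) ((b - a) / 2) with hLdef
  have hL0 : 0 ≤ L := le_min (div_nonneg h₁nn hh₀.le) (by linarith)
  have hL1 : h₀ * L ≤ h₁ := by
    have h := min_le_left (h₁ / h₀) ((b - a) / 2)
    calc h₀ * L ≤ h₀ * (h₁ / h₀) := by
          exact mul_le_mul_of_nonneg_left h hh₀.le
      _ = h₁ := by field_simp
  have hL2 : L ≤ (b - a) / 2 := min_le_right _ _
  have hval : min (h₁ ^ 2 / (2 * h₀)) (h₀ * (b - a) ^ 2 / 8)
      ≤ h₁ * L - h₀ * L ^ 2 / 2 := by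
    rcases le_total (h₁ / h₀) ((b - a) / 2) with h | h
    · have hLeq : L = h₁ / h₀ := min_eq_left h
      refine le_trans (min_le_left _ _) (le_of_eq ?_)
      rw [hLeq]; field_simp; ring
    · have hLeq : L = (b - a) / 2 := min_eq_right h
      refine le_trans (min_le_right _ _) ?_
      rw [hLeq]
      have h' : h₀ * ((b - a) / 2) ≤ h₁ := by
        calc h₀ * ((b - a) / 2) ≤ h₀ * (h₁ / h₀) :=
              mul_le_mul_of_nonneg_left h hh₀.le
          _ = h₁ := by field_simp
      nlinarith [hh₀.le, hab.le]
  have hcalcR : ∀ c d : ℝ, (∫ s in c..d, (h₁ - h₀ * (s - c)))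
      = h₁ * (d - c) - h₀ * (d - c) ^ 2 / 2 := by
    intro c d
    have e : (∫ s in c..d, (h₁ - h₀ * (s - c)))
        = ∫ s in c..d, ((h₁ + h₀ * c) - h₀ * s) := by
      congr 1; funext s; ring
    rw [e, intervalIntegral.integral_sub intervalIntegrable_const
        (((by exact continuous_const.mul continuous_id : Continuous fun s : ℝ => h₀ * s)).intervalIntegrable c d),
      intervalIntegral.integral_const_mul, integral_id, intervalIntegral.integral_const,
      smul_eq_mul]
    ring
  have hcalcL : ∀ c d : ℝ, (∫ s in c..d, (h₁ - h₀ * (d - s)))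
      = h₁ * (d - c) - h₀ * (d - c) ^ 2 / 2 := by
    intro c d
    have e : (∫ s in c..d, (h₁ - h₀ * (d - s)))
        = ∫ s in c..d, ((h₁ - h₀ * d) + h₀ * s) := by
      congr 1; funext s; ring
    rw [e, intervalIntegral.integral_add intervalIntegrable_const
        (((by exact continuous_const.mul continuous_id : Continuous fun s : ℝ => h₀ * s)).intervalIntegrable c d),
      intervalIntegral.integral_const_mul, integral_id, intervalIntegral.integral_const,
      smul_eq_mul]
    ring
  rcases le_total t₀ ((a + b) / 2) with hside | hside
  · -- use the interval [t₀, t₀ + L]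
    have hd : t₀ + L ≤ b := by linarith
    have hlb : ∀ s ∈ Set.Icc t₀ (t₀ + L), h₁ - h₀ * (s - t₀) ≤ φ s := by
      intro s hs
      have hsab : s ∈ Set.Icc a b := ⟨le_trans ht₀.1 hs.1, le_trans hs.2 hd⟩
      have h := hlip t₀ ht₀ s hsab
      have habs : |t₀ - s| = s - t₀ := by
        rw [abs_sub_comm, abs_of_nonneg (by linarith [hs.1])]
      rw [habs, hφt₀] at h
      have := (abs_le.1 h).2
      linarith
    have hkey := key (fun s => h₁ - h₀ * (s - t₀))
      (continuous_const.sub (continuous_const.mul (continuous_id.sub continuous_const) : Continuous fun s : ℝ => h₀ * (s - t₀))) t₀ (t₀ + L) ht₀.1 (by linarith) hd hlb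
    rw [hcalcR t₀ (t₀ + L)] at hkey
    have : h₁ * (t₀ + L - t₀) - h₀ * (t₀ + L - t₀) ^ 2 / 2
        = h₁ * L - h₀ * L ^ 2 / 2 := by ring
    rw [this] at hkey
    linarith
  · -- use the interval [t₀ - L, t₀]
    have hc : a ≤ t₀ - L := by linarith
    have hlb : ∀ s ∈ Set.Icc (t₀ - L) t₀, h₁ - h₀ * (t₀ - s) ≤ φ s := by
      intro s hs
      have hsab : s ∈ Set.Icc a b := ⟨le_trans hc hs.1, le_trans hs.2 ht₀.2⟩
      have h := hlip t₀ ht₀ s hsab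
      have habs : |t₀ - s| = t₀ - s := abs_of_nonneg (by linarith [hs.2])
      rw [habs, hφt₀] at h
      have := (abs_le.1 h).2
      linarith
    have hkey := key (fun s => h₁ - h₀ * (t₀ - s))
      (continuous_const.sub (continuous_const.mul (continuous_const.sub continuous_id) : Continuous fun s : ℝ => h₀ * (t₀ - s))) (t₀ - L) t₀ hc (by linarith) ht₀.2 hlb
    rw [hcalcL (t₀ - L) t₀] at hkey
    have : h₁ * (t₀ - (t₀ - L)) - h₀ * (t₀ - (t₀ - L)) ^ 2 / 2
        = h₁ * L - h₀ * L ^ 2 / 2 := by ring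
    rw [this] at hkey
    linarith
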